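/- Let F be a distribution on ℝ satisfying the β-regularity condition: there exist constants 0 < c_1 < c_2 and β > 0 such that 1 − F(F^{-1}(1) − t) ∈ [c_1 t^β, c_2 t^β] for all 0 ≤ t ≤ ε. Let X_1,…,X_n be i.i.d. from F and X̂_i = X_i + Ẑ_i with Ẑ_i i.i.d. N(0,1/m) independent of the X_i. If n ≥ c_1^{-1} 2^β ε^{-β} log(2/δ) and m ≥ 4 ε^{-2} log(2n/δ), then G = max_{i∈[n]} X̂_i satisfies P(|G − F^{-1}(1)| > ε) ≤ δ. -/

import Mathlib

open MeasureTheory ProbabilityTheory Set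
open scoped NNReal ENNReal

lemma gauss_map_neg (v : ℝ≥0) :
    (gaussianReal 0 v).map (fun x => -x) = gaussianReal 0 v := by
  have h := gaussianReal_map_const_mul (μ := 0) (v := v) (-1)
  simp only [neg_one_mul, mul_zero] at h
  convert h using 2
  ext
  simp

lemma gauss_half {v : ℝ≥0} (hv : v ≠ 0) : gaussianReal 0 v (Set.Ici 0) = 1/2 := by
  have hsym : gaussianReal 0 v (Set.Iic 0) = gaussianReal 0 v (Set.Ici 0) := by
    conv_lhs => rw [← gauss_map_neg v]
    rw [Measure.map_apply measurable_neg measurableSet_Iic]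
    congr 1
    ext x
    simp
  have h0 : gaussianReal 0 v {(0:ℝ)} = 0 :=
    gaussianReal_absolutelyContinuous 0 hv (measure_singleton 0)
  have hIio : gaussianReal 0 v (Set.Iio 0) = gaussianReal 0 v (Set.Ici 0) := by
    rw [← hsym, show Set.Iio (0:ℝ) = Set.Iic 0 \ {0} by
      ext x; simp [lt_iff_le_and_ne]]
    exact measure_diff_null h0
  have huniv : gaussianReal 0 v (Set.Iio 0) + gaussianReal 0 v (Set.Ici 0) = 1 := by
    rw [← measure_union (by exact Iio_disjoint_Ici le_rfl) measurableSet_Ici,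
      Set.Iio_union_Ici, measure_univ]
  rw [hIio] at huniv
  have h2 : 2 * gaussianReal 0 v (Set.Ici 0) = 1 := by rw [two_mul]; exact huniv
  rw [ENNReal.eq_div_iff (by norm_num) (by norm_num)]
  exact h2

lemma gauss_half_shift {v : ℝ≥0} (hv : v ≠ 0) (t : ℝ) : gaussianReal t v (Set.Ici t) = 1/2 := by
  have h := gaussianReal_map_add_const (μ := 0) (v := v) t
  rw [zero_add] at h
  rw [← h, Measure.map_apply (measurable_add_const t) measurableSet_Ici]
  rw [show (fun x => x + t) ⁻¹' Set.Ici t = Set.Ici 0 by ext x; simp]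
  exact gauss_half hv

lemma gauss_tail {v : ℝ≥0} (hv : v ≠ 0) {t : ℝ} (ht : 0 ≤ t) :
    gaussianReal 0 v (Set.Ici t) ≤ ENNReal.ofReal (Real.exp (-t^2/(2*(v:ℝ))) / 2) := by
  have hv' : (0:ℝ) < (v:ℝ) := by
    rw [NNReal.coe_pos]; exact pos_iff_ne_zero.mpr hv
  rw [gaussianReal_apply 0 hv]
  have hpt : ∀ x ∈ Set.Ici t, gaussianPDF 0 v x
      ≤ ENNReal.ofReal (Real.exp (-t^2/(2*(v:ℝ)))) * gaussianPDF t v x := by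
    intro x hx
    rw [gaussianPDF, gaussianPDF, ← ENNReal.ofReal_mul (Real.exp_nonneg _)]
    apply ENNReal.ofReal_le_ofReal
    rw [gaussianPDFReal, gaussianPDFReal, mul_left_comm]
    apply mul_le_mul_of_nonneg_left _ (by positivity)
    rw [← Real.exp_add]
    apply Real.exp_le_exp.mpr
    rw [← add_div]
    have h2v : (0:ℝ) < 2*(v:ℝ) := by linarith
    rw [div_le_div_iff₀ h2v h2v]
    have hx' : t ≤ x := hx
    have key : (0:ℝ) ≤ (2*t*(x-t))*(2*(v:ℝ)) :=
      mul_nonneg (mul_nonneg (by linarith) (by linarith)) h2v.le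
    nlinarith [key]
  calc ∫⁻ x in Set.Ici t, gaussianPDF 0 v x
      ≤ ∫⁻ x in Set.Ici t,
          ENNReal.ofReal (Real.exp (-t^2/(2*(v:ℝ)))) * gaussianPDF t v x :=
        setLIntegral_mono ((measurable_gaussianPDF t v).const_mul _) hpt
    _ = ENNReal.ofReal (Real.exp (-t^2/(2*(v:ℝ)))) * gaussianReal t v (Set.Ici t) := by
        rw [lintegral_const_mul _ (measurable_gaussianPDF t v), ← gaussianReal_apply t hv]
    _ = ENNReal.ofReal (Real.exp (-t^2/(2*(v:ℝ))) / 2) := by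
        rw [gauss_half_shift hv, ENNReal.ofReal_div_of_pos (by norm_num : (0:ℝ) < 2),
          ENNReal.ofReal_ofNat, one_div]
        exact (div_eq_mul_inv _ _).symm

lemma gauss_tail_Iic {v : ℝ≥0} (hv : v ≠ 0) {t : ℝ} (ht : 0 ≤ t) :
    gaussianReal 0 v (Set.Iic (-t)) ≤ ENNReal.ofReal (Real.exp (-t^2/(2*(v:ℝ))) / 2) := by
  conv_lhs => rw [← gauss_map_neg v]
  rw [Measure.map_apply measurable_neg measurableSet_Iic,
    show (fun x:ℝ => -x) ⁻¹' Set.Iic (-t) = Set.Ici t by ext x; simp]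
  exact gauss_tail hv ht


lemma log_le_div_e {x : ℝ} (hx : 0 < x) : Real.log x ≤ x / Real.exp 1 := by
  have h := Real.log_le_sub_one_of_pos (show 0 < x / Real.exp 1 by positivity)
  rw [Real.log_div hx.ne' (Real.exp_ne_zero 1), Real.log_exp] at h
  linarith

lemma exp_inv_e_le : Real.exp (1 / Real.exp 1) ≤ 1.48 := by
  have he : (2.7182818283 : ℝ) < Real.exp 1 := Real.exp_one_gt_d9
  have h1 : (1:ℝ) / Real.exp 1 ≤ 0.368 := by
    rw [div_le_iff₀ (Real.exp_pos 1)]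
    nlinarith
  have h2 : Real.exp (1 / Real.exp 1) ≤ Real.exp 0.368 := Real.exp_le_exp.mpr h1
  have h3 : Real.exp (0.368 : ℝ) = Real.exp 0.092 ^ (4:ℕ) := by
    rw [← Real.exp_nat_mul]
    norm_num
  have h4 : Real.exp (0.092 : ℝ) ≤ (0.908 : ℝ)⁻¹ := by
    have h5 : (0.908 : ℝ) ≤ Real.exp (-0.092) := by
      have := Real.add_one_le_exp (-0.092 : ℝ)
      linarith
    have h6 : Real.exp (0.092 : ℝ) = (Real.exp (-0.092))⁻¹ := by
      rw [← Real.exp_neg]; norm_num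
    rw [h6]
    exact inv_anti₀ (by norm_num) h5
  have h7 : Real.exp (0.092 : ℝ) ^ (4:ℕ) ≤ ((0.908 : ℝ)⁻¹)^(4:ℕ) :=
    pow_le_pow_left₀ (Real.exp_pos _).le h4 4
  have h8 : ((0.908 : ℝ)⁻¹)^(4:ℕ) ≤ 1.48 := by norm_num
  linarith [h2, h3 ▸ h7]

lemma real_bound
    (n : ℕ) (δ K q₂ q r : ℝ)
    (hn1 : 1 ≤ (n:ℝ))
    (hδ0 : 0 < δ) (hδ1 : δ < 1)
    (hK : 0 < K)
    (hnK : Real.log (2/δ) ≤ (n:ℝ) * K)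
    (hq₂0 : 0 ≤ q₂) (hq₂ : q₂ ≤ (δ/(2*n))^2 / 2)
    (hq0 : 0 ≤ q) (hq : q ≤ Real.sqrt (δ/(2*n)) / 2)
    (hr0 : 0 ≤ r) (hr : r ≤ 1 - K*(1-q)) :
    (n:ℝ) * q₂ + r^n ≤ δ := by
  have hn0 : (0:ℝ) < n := by linarith
  have hL : 0 < Real.log (2/δ) := Real.log_pos (by rw [lt_div_iff₀ hδ0]; linarith)
  set L := Real.log (2/δ) with hLdef
  set u := Real.sqrt (δ/(2*n)) with hudef
  have hfrac0 : 0 < δ/(2*n) := by positivity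
  have hfrac1 : δ/(2*n) < 1 := by
    rw [div_lt_one (by linarith)]
    linarith
  have hu0 : 0 < u := Real.sqrt_pos.mpr hfrac0
  have hu1 : u < 1 := by
    rw [hudef, show (1:ℝ) = Real.sqrt 1 by simp]
    exact Real.sqrt_lt_sqrt hfrac0.le hfrac1
  have hu2 : u^2 = δ/(2*n) := Real.sq_sqrt hfrac0.le
  have hlogu : 0 < Real.log (1/u) := Real.log_pos (by rw [lt_div_iff₀ hu0]; linarith)
  -- L ≤ 2 log(1/u)
  have key1 : L ≤ 2 * Real.log (1/u) := by
    have h1 : (2:ℝ)/δ ≤ (1/u)^2 := by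
      rw [div_pow, one_pow, hu2]
      rw [div_le_div_iff₀ hδ0 hfrac0]
      have e1 : 2 * (δ/(2*(n:ℝ))) = δ/(n:ℝ) := by
        field_simp
      rw [e1, one_mul]
      exact div_le_self hδ0.le hn1
    calc L ≤ Real.log ((1/u)^2) := Real.log_le_log (by positivity) h1
      _ = 2 * Real.log (1/u) := by
          rw [Real.log_pow]; push_cast; ring
  -- u log(1/u) ≤ 1/e
  have key2 : u * Real.log (1/u) ≤ 1 / Real.exp 1 := by
    have h1 : Real.log (1/u) ≤ (1/u) / Real.exp 1 := log_le_div_e (by positivity)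
    have h2 : u * Real.log (1/u) ≤ u * ((1/u) / Real.exp 1) :=
      mul_le_mul_of_nonneg_left h1 hu0.le
    have h3 : u * ((1/u) / Real.exp 1) = 1 / Real.exp 1 := by
      field_simp
    linarith
  have key3 : L * q ≤ 1 / Real.exp 1 := by
    have : L * q ≤ (2 * Real.log (1/u)) * (u/2) := by
      apply mul_le_mul key1 hq (by linarith) (by positivity)
    calc L * q ≤ (2 * Real.log (1/u)) * (u/2) := this
      _ = u * Real.log (1/u) := by ring
      _ ≤ 1 / Real.exp 1 := key2
  have hq_half : q ≤ 1/2 := by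
    have : u ≤ 1 := hu1.le
    nlinarith
  -- r^n ≤ (δ/2) * exp(L*q)
  have hrn : r^n ≤ δ/2 * Real.exp (L*q) := by
    have h1 : r ≤ Real.exp (-(K*(1-q))) := by
      have := Real.add_one_le_exp (-(K*(1-q)))
      linarith
    have h2 : r^n ≤ Real.exp (-(K*(1-q)))^n := pow_le_pow_left₀ hr0 h1 n
    have h3 : Real.exp (-(K*(1-q)))^n = Real.exp (-(n*(K*(1-q)))) := by
      rw [← Real.exp_nat_mul]; ring_nf
    have h4 : L * (1-q) ≤ (n:ℝ)*(K*(1-q)) := by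
      have h1q : (0:ℝ) ≤ 1 - q := by linarith
      calc L * (1-q) ≤ ((n:ℝ)*K) * (1-q) := mul_le_mul_of_nonneg_right hnK h1q
        _ = (n:ℝ)*(K*(1-q)) := by ring
    have h5 : Real.exp (-((n:ℝ)*(K*(1-q)))) ≤ Real.exp (-(L*(1-q))) :=
      Real.exp_le_exp.mpr (by linarith)
    have h6 : Real.exp (-(L*(1-q))) = δ/2 * Real.exp (L*q) := by
      rw [show -(L*(1-q)) = -L + L*q by ring, Real.exp_add]
      congr 1
      rw [hLdef, Real.exp_neg, Real.exp_log (by positivity)]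
      rw [inv_div]
    calc r^n ≤ Real.exp (-(K*(1-q)))^n := h2
      _ = Real.exp (-((n:ℝ)*(K*(1-q)))) := h3
      _ ≤ Real.exp (-(L*(1-q))) := h5
      _ = δ/2 * Real.exp (L*q) := h6
  have hexp : Real.exp (L*q) ≤ 1.48 := le_trans (Real.exp_le_exp.mpr key3) exp_inv_e_le
  have hrn2 : r^n ≤ 0.74 * δ := by
    calc r^n ≤ δ/2 * Real.exp (L*q) := hrn
      _ ≤ δ/2 * 1.48 := by nlinarith
      _ = 0.74 * δ := by ring
  have hnq2 : (n:ℝ) * q₂ ≤ δ/8 := by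
    have h1 : (n:ℝ) * q₂ ≤ (n:ℝ) * ((δ/(2*n))^2/2) := mul_le_mul_of_nonneg_left hq₂ hn0.le
    have h2 : (n:ℝ) * ((δ/(2*n))^2/2) = δ^2/(8*n) := by
      field_simp
      ring
    have h3 : δ^2/(8*n) ≤ δ/8 := by
      rw [div_le_div_iff₀ (by linarith) (by norm_num)]
      nlinarith
    linarith
  linarith

set_option maxHeartbeats 1000000 in
theorem stmt2
    {Ω : Type*} [MeasurableSpace Ω] (P : Measure Ω) [IsProbabilityMeasure P]
    (μ : Measure ℝ) [IsProbabilityMeasure μ]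
    (c₁ c₂ β ε δ : ℝ) (hc₁ : 0 < c₁) (hc₁₂ : c₁ < c₂) (hβ : 0 < β)
    (hε : 0 < ε) (hδ0 : 0 < δ) (hδ1 : δ < 1)
    (xmax : ℝ)
    (hreg : ∀ t : ℝ, 0 ≤ t → t ≤ ε →
      c₁ * t ^ β ≤ 1 - (μ (Set.Iic (xmax - t))).toReal ∧
      1 - (μ (Set.Iic (xmax - t))).toReal ≤ c₂ * t ^ β)
    (n m : ℕ) (X Z : Fin n → Ω → ℝ)
    (hindep : iIndepFun (fun i ω => (X i ω, Z i ω)) P)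
    (hlaw : ∀ i, Measure.map (fun ω => (X i ω, Z i ω)) P
      = μ.prod (gaussianReal 0 (1 / (m : ℝ≥0))))
    (hn : c₁⁻¹ * 2 ^ β * ε ^ (-β) * Real.log (2 / δ) ≤ (n : ℝ))
    (hm : 4 * ε ^ (-2 : ℝ) * Real.log (2 * n / δ) ≤ (m : ℝ)) :
    P {ω | |(⨆ i, (X i ω + Z i ω)) - xmax| > ε} ≤ ENNReal.ofReal δ := by
  classical
  have hL : 0 < Real.log (2/δ) := Real.log_pos (by rw [lt_div_iff₀ hδ0]; linarith)
  have h2β : (0:ℝ) < 2 ^ β := Real.rpow_pos_of_pos two_pos β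
  have hεβ : (0:ℝ) < ε ^ β := Real.rpow_pos_of_pos hε β
  have hεnβ : (0:ℝ) < ε ^ (-β) := Real.rpow_pos_of_pos hε (-β)
  have hn0 : n ≠ 0 := by
    rintro rfl
    rw [Nat.cast_zero] at hn
    nlinarith [mul_pos (mul_pos (mul_pos (inv_pos.mpr hc₁) h2β) hεnβ) hL]
  have hn1 : (1:ℝ) ≤ (n:ℝ) := by exact_mod_cast Nat.one_le_iff_ne_zero.mpr hn0
  haveI : NeZero n := ⟨hn0⟩
  have hnpos : (0:ℝ) < n := by linarith
  have hM : 0 < Real.log (2*n/δ) := Real.log_pos (by rw [lt_div_iff₀ hδ0]; nlinarith)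
  have hε2 : (0:ℝ) < ε ^ (-2:ℝ) := Real.rpow_pos_of_pos hε _
  have hm0 : m ≠ 0 := by
    rintro rfl
    rw [Nat.cast_zero] at hm
    nlinarith [mul_pos (mul_pos (by norm_num : (0:ℝ)<4) hε2) hM]
  have hm1 : (1:ℝ) ≤ (m:ℝ) := by exact_mod_cast Nat.one_le_iff_ne_zero.mpr hm0
  have hmpos : (0:ℝ) < m := by linarith
  set v : ℝ≥0 := 1 / (m:ℝ≥0) with hvdef
  have hvne : v ≠ 0 := by
    rw [hvdef]
    simp [Nat.cast_ne_zero.mpr hm0]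
  have hvR : (v:ℝ) = 1/(m:ℝ) := by rw [hvdef]; push_cast; ring
  have e1A : -ε^2/(2*(v:ℝ)) = -(ε^2*(m:ℝ)/2) := by
    rw [hvR, show 2*(1/(m:ℝ)) = 2/(m:ℝ) by ring, div_div_eq_mul_div]
    ring
  have e1B : -(ε/2)^2/(2*(v:ℝ)) = -(ε^2*(m:ℝ)/8) := by
    rw [hvR, show 2*(1/(m:ℝ)) = 2/(m:ℝ) by ring, div_div_eq_mul_div]
    ring
  -- the top of the support
  have hregs0 := hreg 0 le_rfl hε.le
  rw [Real.zero_rpow hβ.ne', mul_zero, mul_zero, sub_zero] at hregs0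
  have hmicR : (μ (Set.Iic xmax)).toReal = 1 := by linarith [hregs0.1, hregs0.2]
  have hμIoi : μ (Set.Ioi xmax) = 0 := by
    have h1 : μ (Set.Iic xmax) = 1 := by
      rw [← ENNReal.ofReal_toReal (measure_ne_top μ _), hmicR]; simp
    have h2 := measure_compl (measurableSet_Iic : MeasurableSet (Set.Iic xmax))
      (measure_ne_top μ _)
    rw [Set.compl_Iic, h1, measure_univ] at h2
    simpa using h2
  -- joint law
  have hae : ∀ i, AEMeasurable (fun ω => (X i ω, Z i ω)) P := by
    intro i
    by_contra h
    have h0 := Measure.map_of_not_aemeasurable h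
    rw [hlaw i] at h0
    have h1 : (μ.prod (gaussianReal 0 v)) Set.univ = 1 := measure_univ
    rw [h0] at h1
    simp at h1
  have hmap : ∀ i (S : Set (ℝ×ℝ)), MeasurableSet S →
      P ((fun ω => (X i ω, Z i ω)) ⁻¹' S) = (μ.prod (gaussianReal 0 v)) S := fun i S hS => by
    rw [← Measure.map_apply_of_aemeasurable (hae i) hS, hlaw i]
  -- events
  set SA : Set (ℝ×ℝ) := {p | xmax + ε < p.1 + p.2} with hSAdef
  set SB : Set (ℝ×ℝ) := {p | p.1 + p.2 < xmax - ε} with hSBdef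
  have hSAm : MeasurableSet SA :=
    measurableSet_lt measurable_const (measurable_fst.add measurable_snd)
  have hSBm : MeasurableSet SB :=
    measurableSet_lt (measurable_fst.add measurable_snd) measurable_const
  have hsub : {ω | |(⨆ i, (X i ω + Z i ω)) - xmax| > ε} ⊆
      (⋃ i, (fun ω => (X i ω, Z i ω)) ⁻¹' SA) ∪ (⋂ i, (fun ω => (X i ω, Z i ω)) ⁻¹' SB) := by
    intro ω hω
    have hω' : ε < |(⨆ i, (X i ω + Z i ω)) - xmax| := hω
    rcases lt_abs.mp hω' with hcase | hcase
    · left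
      obtain ⟨i, hi⟩ := exists_eq_ciSup_of_finite (f := fun i => X i ω + Z i ω)
      refine Set.mem_iUnion.mpr ⟨i, ?_⟩
      simp only [Set.mem_preimage, hSAdef, Set.mem_setOf_eq]
      show xmax + ε < X i ω + Z i ω
      rw [hi]
      linarith
    · right
      refine Set.mem_iInter.mpr fun i => ?_
      simp only [Set.mem_preimage, hSBdef, Set.mem_setOf_eq]
      show X i ω + Z i ω < xmax - ε
      have hle : X i ω + Z i ω ≤ ⨆ j, (X j ω + Z j ω) :=
        le_ciSup (f := fun j => X j ω + Z j ω) (Set.Finite.bddAbove (Set.finite_range _)) i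
      linarith
  -- real quantities
  set q₂ : ℝ := Real.exp (-(ε^2*(m:ℝ)/2))/2 with hq₂def
  set q : ℝ := Real.exp (-(ε^2*(m:ℝ)/8))/2 with hqdef
  set K : ℝ := c₁ * (ε/2)^β with hKdef
  set r : ℝ := ((μ.prod (gaussianReal 0 v)) SB).toReal with hrdef
  have hq₂0 : 0 ≤ q₂ := by rw [hq₂def]; positivity
  have hq0 : 0 ≤ q := by rw [hqdef]; positivity
  have hr0 : 0 ≤ r := ENNReal.toReal_nonneg
  have hKpos : 0 < K := by
    rw [hKdef]
    exact mul_pos hc₁ (Real.rpow_pos_of_pos (by linarith) β)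
  -- bound on SA
  have hSA_bound : (μ.prod (gaussianReal 0 v)) SA ≤ ENNReal.ofReal q₂ := by
    have hsub2 : SA ⊆ (Set.Ioi xmax ×ˢ (Set.univ : Set ℝ)) ∪
        ((Set.univ : Set ℝ) ×ˢ Set.Ioi ε) := by
      rintro ⟨x,z⟩ h
      simp only [hSAdef, Set.mem_setOf_eq] at h
      simp only [Set.mem_union, Set.mem_prod, Set.mem_Ioi, Set.mem_univ, and_true, true_and]
      by_contra hcon
      push_neg at hcon
      obtain ⟨h1, h2⟩ := hcon
      linarith
    refine le_trans (measure_mono hsub2) (le_trans (measure_union_le _ _) ?_)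
    rw [Measure.prod_prod, Measure.prod_prod, measure_univ, measure_univ, mul_one, one_mul,
      hμIoi, zero_add]
    refine le_trans (measure_mono Set.Ioi_subset_Ici_self)
      (le_trans (gauss_tail hvne hε.le) (le_of_eq ?_))
    rw [hq₂def, e1A]
  -- bound on SB
  set T : Set (ℝ×ℝ) := (Set.Ioi (xmax - ε/2)) ×ˢ (Set.Ici (-(ε/2))) with hTdef
  have hTm : MeasurableSet T := measurableSet_Ioi.prod measurableSet_Ici
  have hsub3 : SB ⊆ Tᶜ := by
    rintro ⟨x,z⟩ h
    simp only [hSBdef, Set.mem_setOf_eq] at h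
    simp only [hTdef, Set.mem_compl_iff, Set.mem_prod, Set.mem_Ioi, Set.mem_Ici, not_and, not_le]
    intro h1
    linarith
  have hSB_bound : (μ.prod (gaussianReal 0 v)) SB ≤ 1 - (μ.prod (gaussianReal 0 v)) T := by
    refine le_trans (measure_mono hsub3) (le_of_eq ?_)
    rw [measure_compl hTm (measure_ne_top _ _), measure_univ]
  set a : ℝ := (μ (Set.Ioi (xmax - ε/2))).toReal with hadef
  set gI : ℝ := (gaussianReal 0 v (Set.Ici (-(ε/2)))).toReal with hgIdef
  have hTval : ((μ.prod (gaussianReal 0 v)) T).toReal = a * gI := by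
    rw [hTdef, Measure.prod_prod, ENNReal.toReal_mul]
  -- lower bound for a
  have hsplitμ : (μ (Set.Iic (xmax - ε/2))).toReal + a = 1 := by
    rw [hadef, ← ENNReal.toReal_add (measure_ne_top _ _) (measure_ne_top _ _),
      ← measure_union (Set.Iic_disjoint_Ioi le_rfl) measurableSet_Ioi,
      Set.Iic_union_Ioi, measure_univ, ENNReal.toReal_one]
  have hhalf := hreg (ε/2) (by positivity) (by linarith)
  have ha_lb : K ≤ a := by
    rw [hKdef]
    linarith [hhalf.1]
  have ha_ub : a ≤ 1 := by
    have h1 : μ (Set.Ioi (xmax - ε/2)) ≤ 1 := prob_le_one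
    rw [hadef]
    exact ENNReal.toReal_le_of_le_ofReal zero_le_one (by simpa using h1)
  -- lower bound for gI
  have hgI_lb : 1 - q ≤ gI := by
    have h1 : gaussianReal 0 v (Set.Iio (-(ε/2))) ≤ ENNReal.ofReal q := by
      refine le_trans (measure_mono Set.Iio_subset_Iic_self) ?_
      rw [hqdef, ← e1B]
      exact gauss_tail_Iic hvne (by positivity)
    have h2 : (gaussianReal 0 v (Set.Iio (-(ε/2)))).toReal ≤ q :=
      ENNReal.toReal_le_of_le_ofReal hq0 h1
    have h3 : (gaussianReal 0 v (Set.Iio (-(ε/2)))).toReal + gI = 1 := by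
      rw [hgIdef, ← ENNReal.toReal_add (measure_ne_top _ _) (measure_ne_top _ _),
        ← measure_union (Set.Iio_disjoint_Ici le_rfl) measurableSet_Ici,
        Set.Iio_union_Ici, measure_univ, ENNReal.toReal_one]
    linarith
  have hgI0 : 0 ≤ gI := ENNReal.toReal_nonneg
  have hq_half : q ≤ 1/2 := by
    rw [hqdef]
    have h1 : Real.exp (-(ε^2*(m:ℝ)/8)) ≤ 1 := by
      rw [← Real.exp_zero]
      apply Real.exp_le_exp.mpr
      have h2 : 0 ≤ ε^2*(m:ℝ)/8 := by positivity
      linarith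
    linarith
  -- r ≤ 1 - K (1 - q)
  have hr_le : r ≤ 1 - K*(1-q) := by
    have h1 : r ≤ (1 - (μ.prod (gaussianReal 0 v)) T).toReal :=
      ENNReal.toReal_mono (ENNReal.sub_ne_top ENNReal.one_ne_top) hSB_bound
    have h2 : (1 - (μ.prod (gaussianReal 0 v)) T).toReal = 1 - a * gI := by
      rw [ENNReal.toReal_sub_of_le prob_le_one ENNReal.one_ne_top, hTval, ENNReal.toReal_one]
    have h3 : K * (1-q) ≤ a * gI :=
      mul_le_mul ha_lb hgI_lb (by linarith) (by linarith)
    linarith [h1, h2 ▸ h1]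
  -- exponent computations
  have hε2' : ε ^ (-2:ℝ) = (ε^2)⁻¹ := by
    rw [show (-2:ℝ) = -((2:ℕ):ℝ) by norm_num, Real.rpow_neg hε.le, Real.rpow_natCast]
  have hmM : 4 * Real.log (2*n/δ) ≤ (m:ℝ) * ε^2 := by
    rw [hε2'] at hm
    have := mul_le_mul_of_nonneg_right hm (sq_nonneg ε)
    calc 4 * Real.log (2*n/δ) = 4 * (ε^2)⁻¹ * Real.log (2*n/δ) * ε^2 := by
          field_simp
        _ ≤ (m:ℝ) * ε^2 := this
  have hexpM : Real.exp (-Real.log (2*(n:ℝ)/δ)) = δ/(2*n) := by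
    rw [Real.exp_neg, Real.exp_log (by positivity), inv_div]
  -- q₂ bound
  have hq₂_bound : q₂ ≤ (δ/(2*n))^2 / 2 := by
    rw [hq₂def]
    have e2 : Real.exp (-(ε^2*(m:ℝ)/2)) ≤ Real.exp (-(2*Real.log (2*n/δ))) :=
      Real.exp_le_exp.mpr (by linarith [hmM])
    have e3 : Real.exp (-(2*Real.log (2*(n:ℝ)/δ))) = (δ/(2*n))^2 := by
      rw [show -(2*Real.log (2*(n:ℝ)/δ)) = -Real.log (2*(n:ℝ)/δ) + -Real.log (2*(n:ℝ)/δ) by ring,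
        Real.exp_add, hexpM, sq]
    rw [e3] at e2
    linarith
  -- q bound
  have hq_bound : q ≤ Real.sqrt (δ/(2*n)) / 2 := by
    rw [hqdef]
    have e2 : Real.exp (-(ε^2*(m:ℝ)/8)) ≤ Real.exp (-(Real.log (2*n/δ)/2)) :=
      Real.exp_le_exp.mpr (by linarith [hmM])
    have e3 : Real.exp (-(Real.log (2*(n:ℝ)/δ)/2)) = Real.sqrt (δ/(2*n)) := by
      rw [show δ/(2*(n:ℝ)) = Real.exp (-(Real.log (2*(n:ℝ)/δ)/2))^2 by
        rw [sq, ← Real.exp_add, show -(Real.log (2*(n:ℝ)/δ)/2) + -(Real.log (2*(n:ℝ)/δ)/2)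
          = -Real.log (2*(n:ℝ)/δ) by ring, hexpM]]
      rw [Real.sqrt_sq (Real.exp_pos _).le]
    rw [e3] at e2
    linarith
  -- n K ≥ log(2/δ)
  have hKalt : K = c₁ * ε^β / 2^β := by
    rw [hKdef, Real.div_rpow hε.le (by norm_num : (0:ℝ) ≤ 2)]
    ring
  have hnK : Real.log (2/δ) ≤ (n:ℝ) * K := by
    have h := mul_le_mul_of_nonneg_right hn hKpos.le
    have e : (c₁⁻¹ * 2^β * ε^(-β) * Real.log (2/δ)) * K = Real.log (2/δ) := by
      rw [hKalt, Real.rpow_neg hε.le]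
      field_simp
    linarith [e ▸ h]
  -- union bound assembly
  have hA : P (⋃ i, (fun ω => (X i ω, Z i ω)) ⁻¹' SA) ≤ ENNReal.ofReal ((n:ℝ)*q₂) := by
    refine le_trans (measure_iUnion_le _) ?_
    calc ∑' i : Fin n, P ((fun ω => (X i ω, Z i ω)) ⁻¹' SA)
        = ∑ i : Fin n, P ((fun ω => (X i ω, Z i ω)) ⁻¹' SA) := tsum_fintype _
      _ ≤ ∑ _i : Fin n, ENNReal.ofReal q₂ :=
          Finset.sum_le_sum (fun i _ => by rw [hmap i SA hSAm]; exact hSA_bound)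
      _ = (n:ℝ≥0∞) * ENNReal.ofReal q₂ := by
          rw [Finset.sum_const, Finset.card_univ, Fintype.card_fin, nsmul_eq_mul]
      _ = ENNReal.ofReal ((n:ℝ)*q₂) := by
          rw [← ENNReal.ofReal_natCast n, ← ENNReal.ofReal_mul (Nat.cast_nonneg n)]
  have hB : P (⋂ i, (fun ω => (X i ω, Z i ω)) ⁻¹' SB) ≤ ENNReal.ofReal (r^n) := by
    have hprod := hindep.meas_iInter (s := fun i => (fun ω => (X i ω, Z i ω)) ⁻¹' SB)
      (fun i => ⟨SB, hSBm, rfl⟩)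
    rw [hprod]
    have heq : ∀ i : Fin n, P ((fun ω => (X i ω, Z i ω)) ⁻¹' SB) = ENNReal.ofReal r :=
      fun i => by rw [hmap i SB hSBm, hrdef, ENNReal.ofReal_toReal (measure_ne_top _ _)]
    rw [Finset.prod_congr rfl (fun i _ => heq i), Finset.prod_const, Finset.card_univ,
      Fintype.card_fin, ← ENNReal.ofReal_pow hr0]
  calc P {ω | |(⨆ i, (X i ω + Z i ω)) - xmax| > ε}
      ≤ P ((⋃ i, (fun ω => (X i ω, Z i ω)) ⁻¹' SA) ∪ (⋂ i, (fun ω => (X i ω, Z i ω)) ⁻¹' SB)) :=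
        measure_mono hsub
    _ ≤ P (⋃ i, (fun ω => (X i ω, Z i ω)) ⁻¹' SA)
        + P (⋂ i, (fun ω => (X i ω, Z i ω)) ⁻¹' SB) := measure_union_le _ _
    _ ≤ ENNReal.ofReal ((n:ℝ)*q₂) + ENNReal.ofReal (r^n) := add_le_add hA hB
    _ = ENNReal.ofReal ((n:ℝ)*q₂ + r^n) :=
        (ENNReal.ofReal_add (by positivity) (by positivity)).symm
    _ ≤ ENNReal.ofReal δ := ENNReal.ofReal_le_ofReal
        (real_bound n δ K q₂ q r hn1 hδ0 hδ1 hKpos hnK hq₂0 hq₂_bound hq0 hq_bound hr0 hr_le)
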